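/- Let α ∈ (0,1], B = ⌈log₂(2/α)⌉, B' = ⌊log₂(2/α)⌋, and let B* be a random variable taking values in {B', B} with P(B* = B) = 2 − 2^{B−1}α. Fix θ₀ ∈ ℝ. Suppose for each T ≥ 1 and each b ∈ {B', B} there are real-valued random variables θ̂_T^{(b,1)}, …, θ̂_T^{(b,b)} that are mutually independent and independent of B*, and suppose there are constants r_{T,j} > 0 and σ_j > 0 such that, for each j, r_{T,j}(θ̂_T^{(b,j)} − θ₀) converges in distribution to N(0, σ_j²) as T → ∞. Then P( θ₀ ∉ [ min_{1≤j≤B*} θ̂_T^{(B*,j)}, max_{1≤j≤B*} θ̂_T^{(B*,j)} ] ) → α as T → ∞. -/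

import Mathlib

open MeasureTheory ProbabilityTheory Filter Set

section Helpers

lemma fin_lt_iInf {n : ℕ} (hn : 0 < n) (f : Fin n → ℝ) (a : ℝ) :
    a < ⨅ j, f j ↔ ∀ j, a < f j := by
  haveI : Nonempty (Fin n) := ⟨⟨0, hn⟩⟩
  constructor
  · intro h j
    exact h.trans_le (ciInf_le (Finite.bddBelow_range f) j)
  · intro h
    obtain ⟨j0, hj0⟩ := Finite.exists_min f
    have : ⨅ j, f j = f j0 :=
      le_antisymm (ciInf_le (Finite.bddBelow_range f) j0) (le_ciInf hj0)
    rw [this]; exact h j0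

lemma fin_iSup_lt {n : ℕ} (hn : 0 < n) (f : Fin n → ℝ) (a : ℝ) :
    (⨆ j, f j) < a ↔ ∀ j, f j < a := by
  haveI : Nonempty (Fin n) := ⟨⟨0, hn⟩⟩
  constructor
  · intro h j
    exact (le_ciSup (Finite.bddAbove_range f) j).trans_lt h
  · intro h
    obtain ⟨j0, hj0⟩ := Finite.exists_max f
    have : ⨆ j, f j = f j0 :=
      le_antisymm (ciSup_le hj0) (le_ciSup (Finite.bddAbove_range f) j0)
    rw [this]; exact h j0

lemma gauss_atom_zero {σ : ℝ} (hσ : 0 < σ) :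
    gaussianReal 0 ⟨σ ^ 2, sq_nonneg σ⟩ {0} = 0 := by
  have hv0 : (⟨σ ^ 2, sq_nonneg σ⟩ : NNReal) ≠ 0 := by
    intro h
    exact (pow_ne_zero 2 hσ.ne') (congrArg NNReal.toReal h)
  exact gaussianReal_absolutelyContinuous 0 hv0 Real.volume_singleton

lemma gauss_Ioi_half {σ : ℝ} (hσ : 0 < σ) :
    gaussianReal 0 ⟨σ ^ 2, sq_nonneg σ⟩ (Set.Ioi 0) = 1 / 2 ∧
    gaussianReal 0 ⟨σ ^ 2, sq_nonneg σ⟩ (Set.Iio 0) = 1 / 2 := by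
  set v : NNReal := ⟨σ ^ 2, sq_nonneg σ⟩ with hv
  have hatom : gaussianReal 0 v {0} = 0 := gauss_atom_zero hσ
  have hsym : gaussianReal 0 v (Set.Iio 0) = gaussianReal 0 v (Set.Ioi 0) := by
    have hmap := gaussianReal_map_const_mul (μ := 0) (v := v) (-1)
    have h1 : NNReal.mk ((-1 : ℝ) ^ 2) (sq_nonneg _) = 1 := by ext; norm_num
    rw [mul_zero, h1, one_mul] at hmap
    conv_lhs => rw [← hmap]
    rw [Measure.map_apply (by fun_prop) measurableSet_Iio]
    congr 1
    ext x
    simp [neg_lt_zero]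
  have hcompl : gaussianReal 0 v ({(0 : ℝ)}ᶜ) = 1 := by
    rw [measure_compl (measurableSet_singleton 0) (measure_ne_top _ _), hatom, measure_univ,
      tsub_zero]
  have hunion : gaussianReal 0 v (Set.Iio 0) + gaussianReal 0 v (Set.Ioi 0) = 1 := by
    rw [← measure_union ((Set.Iio_disjoint_Ici le_rfl).mono_right Set.Ioi_subset_Ici_self)
      measurableSet_Ioi, Set.Iio_union_Ioi, hcompl]
  rw [hsym, ← two_mul] at hunion
  have : gaussianReal 0 v (Set.Ioi 0) = 1 / 2 := by
    rw [ENNReal.eq_div_iff (by norm_num) (by norm_num), hunion]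
  exact ⟨this, hsym.trans this⟩

end Helpers

/-- The law (distribution) of a real-valued random variable, as a probability measure. -/
noncomputable def law {Ω : Type*} [MeasurableSpace Ω] (P : Measure Ω)
    [IsProbabilityMeasure P] {X : Ω → ℝ} (hX : Measurable X) :
    ProbabilityMeasure ℝ :=
  ⟨Measure.map X P, Measure.isProbabilityMeasure_map hX.aemeasurable⟩

/-- The centered Gaussian distribution `N(0, σ²)` as a probability measure on `ℝ`. -/
noncomputable def gaussianPM (σ : ℝ) : ProbabilityMeasure ℝ :=
  ⟨gaussianReal 0 ⟨σ ^ 2, sq_nonneg σ⟩, instIsProbabilityMeasureGaussianReal _ _⟩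

lemma tendsto_measure_preimage_of_law {Ω : Type*} [MeasurableSpace Ω] (P : Measure Ω)
    [IsProbabilityMeasure P] (Y : ℕ → Ω → ℝ) (hY : ∀ T, Measurable (Y T))
    (μ : ProbabilityMeasure ℝ)
    (hconv : Tendsto (fun T => law P (hY T)) atTop (nhds μ))
    (E : Set ℝ) (hE : MeasurableSet E) (hfr : (μ : Measure ℝ) (frontier E) = 0) :
    Tendsto (fun T => (P ((Y T) ⁻¹' E)).toReal) atTop (nhds ((μ : Measure ℝ) E).toReal) := by
  have hfr' : μ (frontier E) = 0 := by
    have := μ.ennreal_coeFn_eq_coeFn_toMeasure (frontier E)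
    rw [hfr] at this
    exact_mod_cast this
  have key := ProbabilityMeasure.tendsto_measure_of_null_frontier_of_tendsto hconv hfr'
  have key2 : Tendsto (fun T => ((law P (hY T)) E : ℝ)) atTop (nhds ((μ E : ℝ))) :=
    NNReal.tendsto_coe.mpr key
  have heq : ∀ T, ((law P (hY T)) E : ℝ) = (P ((Y T) ⁻¹' E)).toReal := by
    intro T
    have h1 : ((law P (hY T)) E : ENNReal) = (P ((Y T) ⁻¹' E)) := by
      rw [ProbabilityMeasure.ennreal_coeFn_eq_coeFn_toMeasure]
      exact Measure.map_apply (hY T) hE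
    rw [ENNReal.toReal, ← h1, ENNReal.toNNReal_coe]
  have heq2 : (μ E : ℝ) = ((μ : Measure ℝ) E).toReal := by
    rw [ENNReal.toReal, ← μ.ennreal_coeFn_eq_coeFn_toMeasure, ENNReal.toNNReal_coe]
  rw [heq2] at key2
  exact key2.congr heq

/-- asymptotic exactness of HulC under asymptotic normality.
With `B = ⌈log₂(2/α)⌉`, `B' = ⌊log₂(2/α)⌋`, a randomized bucket count `B*` with
`P(B* = B) = 2 − 2^{B−1}α`, and for each `T` and `b ∈ {B', B}` estimators
`θ̂_T^{(b,1)}, …, θ̂_T^{(b,b)}` that are mutually independent, independent of `B*`,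
and satisfy `r_{T,j}(θ̂_T^{(b,j)} − θ₀) → N(0, σ_j²)` in distribution, the HulC interval
misses `θ₀` with probability converging to `α`. -/
theorem hulc_asymptotic_exactness {Ω : Type*} [MeasurableSpace Ω]
    (P : Measure Ω) [IsProbabilityMeasure P]
    (α : ℝ) (hα0 : 0 < α) (hα1 : α ≤ 1)
    (B B' : ℕ) (hB : B = ⌈Real.logb 2 (2 / α)⌉₊) (hB' : B' = ⌊Real.logb 2 (2 / α)⌋₊)
    (Bstar : Ω → ℕ) (hBstarMeas : Measurable Bstar)
    (hBstarVals : ∀ ω, Bstar ω = B' ∨ Bstar ω = B)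
    (hBstarLaw : P {ω | Bstar ω = B} = ENNReal.ofReal (2 - 2 ^ (B - 1) * α))
    (θ₀ : ℝ)
    (θh : ℕ → (b : ℕ) → Fin b → Ω → ℝ)
    (hmeas : ∀ T b (j : Fin b), Measurable (θh T b j))
    (hindep : ∀ T, ∀ b : ℕ, b = B' ∨ b = B →
      iIndepFun (θh T b) P)
    (hindepBstar : ∀ T, ∀ b : ℕ, b = B' ∨ b = B →
      IndepFun (fun ω => fun j : Fin b => θh T b j ω) Bstar P)
    (r : ℕ → ℕ → ℝ) (hr : ∀ T j, 0 < r T j)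
    (σ : ℕ → ℝ) (hσ : ∀ j, 0 < σ j)
    (hconv : ∀ b : ℕ, b = B' ∨ b = B → ∀ j : Fin b,
      Tendsto
        (fun T => law P (X := fun ω => r T j.1 * (θh T b j ω - θ₀))
          (((hmeas T b j).sub measurable_const).const_mul (r T j.1)))
        atTop (nhds (gaussianPM (σ j.1)))) :
    Tendsto
      (fun T => (P {ω | θ₀ ∉ Set.Icc (⨅ j : Fin (Bstar ω), θh T (Bstar ω) j ω)
          (⨆ j : Fin (Bstar ω), θh T (Bstar ω) j ω)}).toReal)
      atTop (nhds α) := by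
  classical
  set x := Real.logb 2 (2 / α) with hx
  have h2α : (2:ℝ) ≤ 2 / α := by
    rw [le_div_iff₀ hα0]; nlinarith
  have hx1 : 1 ≤ x := by
    rw [hx, Real.le_logb_iff_rpow_le one_lt_two (by positivity)]
    simpa using h2α
  have hx0 : 0 ≤ x := zero_le_one.trans hx1
  have hB'1 : 1 ≤ B' := by
    rw [hB']; exact Nat.le_floor (by exact_mod_cast hx1)
  have hB1 : 1 ≤ B := by
    rw [hB]; exact Nat.one_le_ceil_iff.mpr (zero_lt_one.trans_le hx1)
  have hBB' : B ≤ B' + 1 := by rw [hB, hB']; exact Nat.ceil_le_floor_add_one x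
  have hB'B : B' ≤ B := by rw [hB, hB']; exact Nat.floor_le_ceil x
  have hfloor : (B' : ℝ) ≤ x := hB' ▸ Nat.floor_le hx0
  have hceil : x ≤ (B : ℝ) := hB ▸ Nat.le_ceil x
  have hrpow : (2:ℝ) ^ x = 2 / α :=
    Real.rpow_logb two_pos (by norm_num) (by positivity)
  have h2B' : (2:ℝ) ^ B' ≤ 2 / α := by
    calc (2:ℝ) ^ B' = (2:ℝ) ^ (B' : ℝ) := (Real.rpow_natCast 2 B').symm
    _ ≤ 2 ^ x := Real.rpow_le_rpow_of_exponent_le one_le_two hfloor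
    _ = 2 / α := hrpow
  have h2B : 2 / α ≤ (2:ℝ) ^ B := by
    calc (2:ℝ) / α = 2 ^ x := hrpow.symm
    _ ≤ 2 ^ (B : ℝ) := Real.rpow_le_rpow_of_exponent_le one_le_two hceil
    _ = 2 ^ B := Real.rpow_natCast 2 B
  set p : ℝ := 2 - 2 ^ (B - 1) * α with hp
  have h2Bsplit : (2:ℝ) ^ B = 2 * 2 ^ (B - 1) := by
    conv_lhs => rw [show B = (B - 1) + 1 from (Nat.succ_pred_eq_of_pos hB1).symm]
    ring
  have hkey1 : (2:ℝ) ≤ 2 * 2 ^ (B - 1) * α := by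
    have h := h2B; rw [h2Bsplit] at h; exact (div_le_iff₀ hα0).1 h
  have hp1 : p ≤ 1 := by rw [hp]; nlinarith
  have hkey0 : (2:ℝ) ^ (B - 1) * α ≤ 2 := by
    have hle : (2:ℝ) ^ (B - 1) ≤ 2 / α :=
      le_trans (pow_le_pow_right₀ one_le_two (by omega)) h2B'
    calc (2:ℝ) ^ (B - 1) * α ≤ (2 / α) * α := by nlinarith
    _ = 2 := by field_simp
  have hp0 : 0 ≤ p := by rw [hp]; linarith
  -- the "all greater / all smaller" event
  set G : ℕ → (b : ℕ) → Set Ω := fun T b =>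
    {ω | ∀ j : Fin b, θ₀ < θh T b j ω} ∪ {ω | ∀ j : Fin b, θh T b j ω < θ₀} with hG
  have hGmeas : ∀ T b, MeasurableSet (G T b) := by
    intro T b
    apply MeasurableSet.union
    · have h1 : {ω | ∀ j : Fin b, θ₀ < θh T b j ω}
          = ⋂ j, (θh T b j) ⁻¹' (Set.Ioi θ₀) := by ext ω; simp
      rw [h1]
      exact MeasurableSet.iInter fun j => (hmeas T b j) measurableSet_Ioi
    · have h1 : {ω | ∀ j : Fin b, θh T b j ω < θ₀}
          = ⋂ j, (θh T b j) ⁻¹' (Set.Iio θ₀) := by ext ω; simp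
      rw [h1]
      exact MeasurableSet.iInter fun j => (hmeas T b j) measurableSet_Iio
  -- half limits for each coordinate
  have hhalfIoi : ∀ b, (b = B' ∨ b = B) → ∀ j : Fin b,
      Tendsto (fun T => (P {ω | θ₀ < θh T b j ω}).toReal) atTop (nhds (1/2 : ℝ)) := by
    intro b hb j
    have hY : ∀ T, Measurable (fun ω => r T j.1 * (θh T b j ω - θ₀)) :=
      fun T => ((hmeas T b j).sub measurable_const).const_mul (r T j.1)
    have hfr : ((gaussianPM (σ j.1)) : Measure ℝ) (frontier (Set.Ioi (0:ℝ))) = 0 := by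
      rw [frontier_Ioi]
      exact gauss_atom_zero (hσ j.1)
    have key := tendsto_measure_preimage_of_law P _ hY (gaussianPM (σ j.1)) (hconv b hb j)
      (Set.Ioi 0) measurableSet_Ioi hfr
    have hval : (((gaussianPM (σ j.1)) : Measure ℝ) (Set.Ioi 0)).toReal = 1/2 := by
      show ((gaussianReal 0 ⟨(σ j.1) ^ 2, sq_nonneg _⟩) (Set.Ioi 0)).toReal = 1/2
      rw [(gauss_Ioi_half (hσ j.1)).1]
      simp
    rw [hval] at key
    refine key.congr fun T => ?_
    have hsetEq : (fun ω => r T j.1 * (θh T b j ω - θ₀)) ⁻¹' (Set.Ioi 0)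
        = {ω | θ₀ < θh T b j ω} := by
      ext ω
      simp only [Set.mem_preimage, Set.mem_Ioi, Set.mem_setOf_eq,
        mul_pos_iff_of_pos_left (hr T j.1), sub_pos]
    rw [hsetEq]
  have hhalfIio : ∀ b, (b = B' ∨ b = B) → ∀ j : Fin b,
      Tendsto (fun T => (P {ω | θh T b j ω < θ₀}).toReal) atTop (nhds (1/2 : ℝ)) := by
    intro b hb j
    have hY : ∀ T, Measurable (fun ω => r T j.1 * (θh T b j ω - θ₀)) :=
      fun T => ((hmeas T b j).sub measurable_const).const_mul (r T j.1)
    have hfr : ((gaussianPM (σ j.1)) : Measure ℝ) (frontier (Set.Iio (0:ℝ))) = 0 := by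
      rw [frontier_Iio]
      exact gauss_atom_zero (hσ j.1)
    have key := tendsto_measure_preimage_of_law P _ hY (gaussianPM (σ j.1)) (hconv b hb j)
      (Set.Iio 0) measurableSet_Iio hfr
    have hval : (((gaussianPM (σ j.1)) : Measure ℝ) (Set.Iio 0)).toReal = 1/2 := by
      show ((gaussianReal 0 ⟨(σ j.1) ^ 2, sq_nonneg _⟩) (Set.Iio 0)).toReal = 1/2
      rw [(gauss_Ioi_half (hσ j.1)).2]
      simp
    rw [hval] at key
    refine key.congr fun T => ?_
    have hsetEq : (fun ω => r T j.1 * (θh T b j ω - θ₀)) ⁻¹' (Set.Iio 0)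
        = {ω | θh T b j ω < θ₀} := by
      ext ω
      have hiff : r T j.1 * (θh T b j ω - θ₀) < 0 ↔ θh T b j ω < θ₀ := by
        constructor
        · intro h; nlinarith [hr T j.1]
        · intro h; have := hr T j.1; nlinarith
      simp only [Set.mem_preimage, Set.mem_Iio, Set.mem_setOf_eq, hiff]
    rw [hsetEq]
  -- limit of P(G T b)
  have hGlim : ∀ b, (b = B' ∨ b = B) → 1 ≤ b →
      Tendsto (fun T => (P (G T b)).toReal) atTop (nhds (2 * (1/2 : ℝ) ^ b)) := by
    intro b hb hb1
    haveI : Nonempty (Fin b) := ⟨⟨0, hb1⟩⟩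
    have hAmeas : ∀ T, MeasurableSet {ω | ∀ j : Fin b, θ₀ < θh T b j ω} := by
      intro T
      have h1 : {ω | ∀ j : Fin b, θ₀ < θh T b j ω}
          = ⋂ j, (θh T b j) ⁻¹' (Set.Ioi θ₀) := by ext ω; simp
      rw [h1]; exact MeasurableSet.iInter fun j => (hmeas T b j) measurableSet_Ioi
    have hCmeas : ∀ T, MeasurableSet {ω | ∀ j : Fin b, θh T b j ω < θ₀} := by
      intro T
      have h1 : {ω | ∀ j : Fin b, θh T b j ω < θ₀}
          = ⋂ j, (θh T b j) ⁻¹' (Set.Iio θ₀) := by ext ω; simp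
      rw [h1]; exact MeasurableSet.iInter fun j => (hmeas T b j) measurableSet_Iio
    have hprodGt : ∀ T, (P {ω | ∀ j : Fin b, θ₀ < θh T b j ω}).toReal
        = ∏ j : Fin b, (P {ω | θ₀ < θh T b j ω}).toReal := by
      intro T
      have hsetEq : {ω | ∀ j : Fin b, θ₀ < θh T b j ω}
          = ⋂ j, (θh T b j) ⁻¹' (Set.Ioi θ₀) := by ext ω; simp
      have := (hindep T b hb).meas_iInter
        (s := fun j => (θh T b j) ⁻¹' (Set.Ioi θ₀))
        (fun j => ⟨Set.Ioi θ₀, measurableSet_Ioi, rfl⟩)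
      rw [hsetEq, this, ENNReal.toReal_prod]
      exact Finset.prod_congr rfl fun j _ => rfl
    have hprodLt : ∀ T, (P {ω | ∀ j : Fin b, θh T b j ω < θ₀}).toReal
        = ∏ j : Fin b, (P {ω | θh T b j ω < θ₀}).toReal := by
      intro T
      have hsetEq : {ω | ∀ j : Fin b, θh T b j ω < θ₀}
          = ⋂ j, (θh T b j) ⁻¹' (Set.Iio θ₀) := by ext ω; simp
      have := (hindep T b hb).meas_iInter
        (s := fun j => (θh T b j) ⁻¹' (Set.Iio θ₀))
        (fun j => ⟨Set.Iio θ₀, measurableSet_Iio, rfl⟩)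
      rw [hsetEq, this, ENNReal.toReal_prod]
      exact Finset.prod_congr rfl fun j _ => rfl
    have hlimGt : Tendsto (fun T => (P {ω | ∀ j : Fin b, θ₀ < θh T b j ω}).toReal)
        atTop (nhds ((1/2 : ℝ) ^ b)) := by
      have h1 : Tendsto (fun T => ∏ j : Fin b, (P {ω | θ₀ < θh T b j ω}).toReal)
          atTop (nhds (∏ _j : Fin b, (1/2 : ℝ))) :=
        tendsto_finset_prod _ (fun j _ => hhalfIoi b hb j)
      rw [Finset.prod_const, Finset.card_univ, Fintype.card_fin] at h1
      exact (h1.congr fun T => (hprodGt T).symm)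
    have hlimLt : Tendsto (fun T => (P {ω | ∀ j : Fin b, θh T b j ω < θ₀}).toReal)
        atTop (nhds ((1/2 : ℝ) ^ b)) := by
      have h1 : Tendsto (fun T => ∏ j : Fin b, (P {ω | θh T b j ω < θ₀}).toReal)
          atTop (nhds (∏ _j : Fin b, (1/2 : ℝ))) :=
        tendsto_finset_prod _ (fun j _ => hhalfIio b hb j)
      rw [Finset.prod_const, Finset.card_univ, Fintype.card_fin] at h1
      exact (h1.congr fun T => (hprodLt T).symm)
    have hdisj : ∀ T, Disjoint {ω | ∀ j : Fin b, θ₀ < θh T b j ω}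
        {ω | ∀ j : Fin b, θh T b j ω < θ₀} := by
      intro T
      rw [Set.disjoint_left]
      intro ω h1 h2
      exact absurd (h1 ⟨0, hb1⟩) (not_lt.2 (h2 ⟨0, hb1⟩).le)
    have hsum : ∀ T, (P (G T b)).toReal
        = (P {ω | ∀ j : Fin b, θ₀ < θh T b j ω}).toReal
          + (P {ω | ∀ j : Fin b, θh T b j ω < θ₀}).toReal := by
      intro T
      rw [hG]
      simp only []
      rw [measure_union (hdisj T) (hCmeas T),
        ENNReal.toReal_add (measure_ne_top _ _) (measure_ne_top _ _)]
    have := hlimGt.add hlimLt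
    rw [show (1/2:ℝ)^b + (1/2)^b = 2 * (1/2)^b by ring] at this
    exact this.congr fun T => (hsum T).symm
  -- characterization of the miss event
  have hbpos : ∀ ω, 0 < Bstar ω := by
    intro ω; rcases hBstarVals ω with h | h <;> rw [h] <;> omega
  have hEchar : ∀ T ω, (θ₀ ∉ Set.Icc (⨅ j : Fin (Bstar ω), θh T (Bstar ω) j ω)
      (⨆ j : Fin (Bstar ω), θh T (Bstar ω) j ω))
      ↔ ((∀ j : Fin (Bstar ω), θ₀ < θh T (Bstar ω) j ω)
        ∨ (∀ j : Fin (Bstar ω), θh T (Bstar ω) j ω < θ₀)) := by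
    intro T ω
    rw [Set.mem_Icc, not_and_or, not_le, not_le,
      fin_lt_iInf (hbpos ω), fin_iSup_lt (hbpos ω)]
  rcases eq_or_ne B' B with hcase | hne
  · -- the degenerate case B' = B : then x = B exactly and 2^B = 2/α
    have hxB : x = (B : ℝ) := le_antisymm hceil (hcase ▸ hfloor)
    have h2Bα : (2:ℝ) ^ B = 2 / α := by
      rw [← hrpow, hxB, Real.rpow_natCast]
    have hαval : 2 * (1/2 : ℝ) ^ B = α := by
      have hpow : (0:ℝ) < 2 ^ B := by positivity
      rw [one_div, inv_pow]
      rw [h2Bα]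
      field_simp
    have hBsEq : ∀ ω, Bstar ω = B := fun ω => (hBstarVals ω).elim (fun h => h.trans hcase) id
    have hEset : ∀ T, {ω | θ₀ ∉ Set.Icc (⨅ j : Fin (Bstar ω), θh T (Bstar ω) j ω)
        (⨆ j : Fin (Bstar ω), θh T (Bstar ω) j ω)} = G T B := by
      intro T
      ext ω
      have hb := hBsEq ω
      simp only [Set.mem_setOf_eq]
      rw [hEchar T ω, hb, hG]
      simp only [Set.mem_union, Set.mem_setOf_eq]
    have := hGlim B (Or.inr rfl) hB1
    rw [hαval] at this
    exact this.congr fun T => by rw [hEset T]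
  · -- main case : B = B' + 1
    have hBeq : B = B' + 1 := by omega
    have hSmB : MeasurableSet {ω | Bstar ω = B} := hBstarMeas (measurableSet_singleton B)
    have hSmB' : MeasurableSet {ω | Bstar ω = B'} := hBstarMeas (measurableSet_singleton B')
    have hPB : P {ω | Bstar ω = B} = ENNReal.ofReal p := hBstarLaw
    have hcompl : {ω | Bstar ω = B'} = {ω | Bstar ω = B}ᶜ := by
      ext ω
      simp only [Set.mem_setOf_eq, Set.mem_compl_iff]
      constructor
      · intro h h2; rw [h] at h2; exact hne h2
      · intro h; rcases hBstarVals ω with h' | h'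
        · exact h'
        · exact absurd h' h
    have hPB' : P {ω | Bstar ω = B'} = ENNReal.ofReal (1 - p) := by
      rw [hcompl, measure_compl hSmB (measure_ne_top _ _), hPB, measure_univ,
        ← ENNReal.ofReal_one, ← ENNReal.ofReal_sub _ hp0]
    have hindepProd : ∀ T b, (b = B' ∨ b = B) →
        P (G T b ∩ {ω | Bstar ω = b}) = P (G T b) * P {ω | Bstar ω = b} := by
      intro T b hb
      have hv := hindepBstar T b hb
      set S : Set (Fin b → ℝ) := {y | ∀ j, θ₀ < y j} ∪ {y | ∀ j, y j < θ₀} with hS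
      have hSmeas : MeasurableSet S := by
        apply MeasurableSet.union
        · have h1 : {y : Fin b → ℝ | ∀ j, θ₀ < y j}
              = ⋂ j, (fun y : Fin b → ℝ => y j) ⁻¹' (Set.Ioi θ₀) := by ext y; simp
          rw [h1]
          exact MeasurableSet.iInter fun j => (measurable_pi_apply j) measurableSet_Ioi
        · have h1 : {y : Fin b → ℝ | ∀ j, y j < θ₀}
              = ⋂ j, (fun y : Fin b → ℝ => y j) ⁻¹' (Set.Iio θ₀) := by ext y; simp
          rw [h1]
          exact MeasurableSet.iInter fun j => (measurable_pi_apply j) measurableSet_Iio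
      have hGpre : G T b = (fun ω => fun j : Fin b => θh T b j ω) ⁻¹' S := by
        ext ω
        simp only [hG, hS, Set.mem_union, Set.mem_setOf_eq, Set.mem_preimage]
      have hBpre : {ω | Bstar ω = b} = Bstar ⁻¹' {b} := rfl
      rw [hGpre, hBpre]
      exact hv.measure_inter_preimage_eq_mul S {b} hSmeas (measurableSet_singleton b)
    -- decomposition of the miss event
    have hEdecomp : ∀ T, {ω | θ₀ ∉ Set.Icc (⨅ j : Fin (Bstar ω), θh T (Bstar ω) j ω)
        (⨆ j : Fin (Bstar ω), θh T (Bstar ω) j ω)}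
        = (G T B' ∩ {ω | Bstar ω = B'}) ∪ (G T B ∩ {ω | Bstar ω = B}) := by
      intro T
      ext ω
      simp only [Set.mem_setOf_eq, Set.mem_union, Set.mem_inter_iff]
      rw [hEchar T ω]
      constructor
      · intro hmem
        rcases hBstarVals ω with h | h
        · left
          rw [h] at hmem
          refine ⟨?_, h⟩
          rw [hG]; simp only [Set.mem_union, Set.mem_setOf_eq]; exact hmem
        · right
          rw [h] at hmem
          refine ⟨?_, h⟩
          rw [hG]; simp only [Set.mem_union, Set.mem_setOf_eq]; exact hmem
      · intro hmem
        rcases hmem with ⟨hg, h⟩ | ⟨hg, h⟩ <;>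
        · rw [h]
          rw [hG] at hg
          simp only [Set.mem_union, Set.mem_setOf_eq] at hg
          exact hg
    have hdisjT : ∀ T, Disjoint (G T B' ∩ {ω | Bstar ω = B'}) (G T B ∩ {ω | Bstar ω = B}) := by
      intro T
      apply Disjoint.mono Set.inter_subset_right Set.inter_subset_right
      rw [Set.disjoint_left]
      intro ω h1 h2
      rw [Set.mem_setOf_eq] at h1 h2
      exact hne (h1 ▸ h2 ▸ rfl)
    have hval : ∀ T, (P {ω | θ₀ ∉ Set.Icc (⨅ j : Fin (Bstar ω), θh T (Bstar ω) j ω)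
        (⨆ j : Fin (Bstar ω), θh T (Bstar ω) j ω)}).toReal
        = (P (G T B')).toReal * (1 - p) + (P (G T B)).toReal * p := by
      intro T
      rw [hEdecomp T,
        measure_union (hdisjT T) ((hGmeas T B).inter hSmB),
        ENNReal.toReal_add (measure_ne_top _ _) (measure_ne_top _ _),
        hindepProd T B' (Or.inl rfl), hindepProd T B (Or.inr rfl),
        hPB, hPB', ENNReal.toReal_mul, ENNReal.toReal_mul,
        ENNReal.toReal_ofReal hp0, ENNReal.toReal_ofReal (by linarith : (0:ℝ) ≤ 1 - p)]
    have hlim : Tendsto (fun T => (P (G T B')).toReal * (1 - p) + (P (G T B)).toReal * p)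
        atTop (nhds ((2 * (1/2 : ℝ) ^ B') * (1 - p) + (2 * (1/2 : ℝ) ^ B) * p)) :=
      ((hGlim B' (Or.inl rfl) hB'1).mul_const _).add ((hGlim B (Or.inr rfl) hB1).mul_const _)
    have hαval : (2 * (1/2 : ℝ) ^ B') * (1 - p) + (2 * (1/2 : ℝ) ^ B) * p = α := by
      have hpdef : p = 2 - 2 ^ B' * α := by
        rw [hp, show B - 1 = B' from by omega]
      have hpow : (0:ℝ) < 2 ^ B' := by positivity
      rw [hpdef, hBeq, pow_succ]
      have h12 : (1/2 : ℝ) ^ B' = 1 / 2 ^ B' := by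
        rw [one_div, one_div, inv_pow]
      rw [h12]
      field_simp
      ring
    rw [hαval] at hlim
    exact hlim.congr fun T => (hval T).symm
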